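/- If G is a König-Egerváry graph, then the number of vertices v such that G - v is König-Egerváry equals n(G) - |core(G)| + |ker(G)|. -/

import Mathlib

open SimpleGraph

variable {V : Type*}

/-- A set of vertices is independent: no two of its vertices are adjacent. -/
def IsIndep (G : SimpleGraph V) (s : Set V) : Prop :=
  s.Pairwise fun a b => ¬ G.Adj a b

/-- The independence number α(G). -/
noncomputable def alphaNum (G : SimpleGraph V) : ℕ :=
  sSup {n | ∃ s : Set V, IsIndep G s ∧ s.ncard = n}

/-- The matching number μ(G). -/
noncomputable def muNum (G : SimpleGraph V) : ℕ :=
  sSup {n | ∃ M : SimpleGraph.Subgraph G, M.IsMatching ∧ M.edgeSet.ncard = n}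

/-- The neighborhood N(A) of a set of vertices. -/
def nbhd (G : SimpleGraph V) (A : Set V) : Set V := {v | ∃ a ∈ A, G.Adj a v}

/-- The difference d(A) = |A| - |N(A)| of a set of vertices. -/
noncomputable def diffSet (G : SimpleGraph V) (A : Set V) : ℤ :=
  (A.ncard : ℤ) - (nbhd G A).ncard

/-- The critical difference d(G). -/
noncomputable def critDiff (G : SimpleGraph V) : ℤ :=
  sSup {d | ∃ I : Set V, IsIndep G I ∧ diffSet G I = d}

/-- A critical independent set: an independent set attaining the critical difference. -/
def IsCriticalIndep (G : SimpleGraph V) (A : Set V) : Prop :=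
  IsIndep G A ∧ diffSet G A = critDiff G

/-- ker(G): the intersection of all critical independent sets. -/
noncomputable def kerSet (G : SimpleGraph V) : Set V :=
  ⋂₀ {A | IsCriticalIndep G A}

/-- A maximum independent set. -/
noncomputable def IsMaxIndep (G : SimpleGraph V) (S : Set V) : Prop :=
  IsIndep G S ∧ S.ncard = alphaNum G

/-- core(G): the intersection of all maximum independent sets. -/
noncomputable def coreSet (G : SimpleGraph V) : Set V :=
  ⋂₀ {S | IsMaxIndep G S}

/-- A König–Egerváry graph: α(G) + μ(G) = n(G). -/
def KonigEgervary (G : SimpleGraph V) : Prop :=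
  alphaNum G + muNum G = Nat.card V

section Aux
variable {G : SimpleGraph V}

lemma edge_eq_of_mem {M : G.Subgraph} (hM : M.IsMatching) {e f : Sym2 V}
    (he : e ∈ M.edgeSet) (hf : f ∈ M.edgeSet) {x : V} (hxe : x ∈ e) (hxf : x ∈ f) : e = f := by
  obtain ⟨y, rfl⟩ := Sym2.mem_iff_exists.mp hxe
  obtain ⟨z, rfl⟩ := Sym2.mem_iff_exists.mp hxf
  rw [SimpleGraph.Subgraph.mem_edgeSet] at he hf
  obtain ⟨w, -, hu⟩ := hM (M.edge_vert he)
  rw [hu y he, hu z hf]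

open Classical in
noncomputable def mpartner (M : G.Subgraph) (a : V) : V :=
  if h : ∃ w, M.Adj a w then h.choose else a

lemma mpartner_adj {M : G.Subgraph} (hM : M.IsMatching) {a : V} (ha : a ∈ M.verts) :
    M.Adj a (mpartner M a) := by
  obtain ⟨w, hw, -⟩ := hM ha
  rw [mpartner, dif_pos ⟨w, hw⟩]
  exact (⟨w, hw⟩ : ∃ w, M.Adj a w).choose_spec

lemma mpartner_eq {M : G.Subgraph} (hM : M.IsMatching) {a w : V} (h : M.Adj a w) :
    mpartner M a = w := by
  obtain ⟨u, -, hu⟩ := hM (M.edge_vert h)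
  exact (hu _ (mpartner_adj hM (M.edge_vert h))).trans (hu _ h).symm

lemma mpartner_injOn {M : G.Subgraph} (hM : M.IsMatching) :
    Set.InjOn (mpartner M) M.verts := by
  intro a ha b hb hab
  have h1 := (mpartner_adj hM ha).symm
  have h2 := (mpartner_adj hM hb).symm
  rw [hab] at h1
  obtain ⟨u, -, hu⟩ := hM (M.edge_vert h1)
  exact (hu _ h1).trans (hu _ h2).symm

lemma matching_verts_ncard [Finite V] {M : G.Subgraph} (hM : M.IsMatching) :
    M.verts.ncard = 2 * M.edgeSet.ncard := by
  classical
  haveI := Fintype.ofFinite V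
  have hvfin : M.verts.Finite := Set.toFinite _
  have hefin : M.edgeSet.Finite := Set.toFinite _
  have key : hvfin.toFinset = hefin.toFinset.biUnion
      (fun e => (Set.toFinite {x | x ∈ e}).toFinset) := by
    ext x
    simp only [Set.Finite.mem_toFinset, Finset.mem_biUnion, Set.mem_setOf_eq]
    constructor
    · intro hx
      obtain ⟨w, hw, -⟩ := hM hx
      exact ⟨s(x, w), SimpleGraph.Subgraph.mem_edgeSet.mpr hw, by simp⟩
    · rintro ⟨e, he, hxe⟩
      obtain ⟨y, rfl⟩ := Sym2.mem_iff_exists.mp hxe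
      exact M.edge_vert (SimpleGraph.Subgraph.mem_edgeSet.mp he)
  have hdisj : ∀ e ∈ hefin.toFinset, ∀ f ∈ hefin.toFinset, e ≠ f →
      Disjoint ((Set.toFinite {x | x ∈ e}).toFinset) ((Set.toFinite {x | x ∈ f}).toFinset) := by
    intro e he f hf hef
    rw [Set.Finite.mem_toFinset] at he hf
    rw [Finset.disjoint_left]
    intro x hxe hxf
    rw [Set.Finite.mem_toFinset] at hxe hxf
    exact hef (edge_eq_of_mem hM he hf hxe hxf)
  have hcard2 : ∀ e ∈ hefin.toFinset, ((Set.toFinite {x | x ∈ e}).toFinset).card = 2 := by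
    intro e he
    rw [Set.Finite.mem_toFinset] at he
    rw [← Set.ncard_eq_toFinset_card _ (Set.toFinite _)]
    induction e with
    | h a b =>
      have hadj : G.Adj a b := M.adj_sub (SimpleGraph.Subgraph.mem_edgeSet.mp he)
      have hne : a ≠ b := G.ne_of_adj hadj
      have hset : {x | x ∈ s(a,b)} = ({a, b} : Set V) := by
        ext x; simp [Sym2.mem_iff]
      rw [hset, Set.ncard_pair hne]
  rw [Set.ncard_eq_toFinset_card _ hvfin, Set.ncard_eq_toFinset_card _ hefin, key,
    Finset.card_biUnion hdisj, Finset.sum_congr rfl hcard2, Finset.sum_const, smul_eq_mul,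
    mul_comm]

end Aux
section Nums
variable {G : SimpleGraph V} [Finite V]

lemma ncard_le_natCard (t : Set V) : t.ncard ≤ Nat.card V := by
  simpa [Set.ncard_univ] using Set.ncard_le_ncard (Set.subset_univ t) Set.finite_univ

lemma indep_ncard_le_alpha {s : Set V} (hs : IsIndep G s) : s.ncard ≤ alphaNum G := by
  apply le_csSup
  · refine ⟨Nat.card V, ?_⟩
    rintro n ⟨t, -, rfl⟩
    exact ncard_le_natCard t
  · exact ⟨s, hs, rfl⟩

lemma exists_maxIndep (G : SimpleGraph V) : ∃ S : Set V, IsMaxIndep G S := by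
  have h : alphaNum G ∈ {n | ∃ s : Set V, IsIndep G s ∧ s.ncard = n} := by
    apply Nat.sSup_mem
    · exact ⟨0, ∅, fun a ha => absurd ha (Set.notMem_empty a), by simp⟩
    · refine ⟨Nat.card V, ?_⟩
      rintro n ⟨t, -, rfl⟩
      exact ncard_le_natCard t
  obtain ⟨s, hs, hcard⟩ := h
  exact ⟨s, hs, hcard⟩

lemma ncard_le_natCard_sym2 (t : Set (Sym2 V)) : t.ncard ≤ Nat.card (Sym2 V) := by
  simpa [Set.ncard_univ] using Set.ncard_le_ncard (Set.subset_univ t) Set.finite_univ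

lemma matching_ncard_le_mu {M : G.Subgraph} (hM : M.IsMatching) :
    M.edgeSet.ncard ≤ muNum G := by
  apply le_csSup
  · refine ⟨Nat.card (Sym2 V), ?_⟩
    rintro n ⟨M', -, rfl⟩
    exact ncard_le_natCard_sym2 _
  · exact ⟨M, hM, rfl⟩

lemma exists_maxMatching (G : SimpleGraph V) :
    ∃ M : G.Subgraph, M.IsMatching ∧ M.edgeSet.ncard = muNum G := by
  have h : muNum G ∈ {n | ∃ M : G.Subgraph, M.IsMatching ∧ M.edgeSet.ncard = n} := by
    apply Nat.sSup_mem
    · exact ⟨0, ⊥, fun a ha => absurd ha (by simp), by simp⟩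
    · refine ⟨Nat.card (Sym2 V), ?_⟩
      rintro n ⟨M', -, rfl⟩
      exact ncard_le_natCard_sym2 _
  exact h

lemma diff_le_critDiff {A : Set V} (hA : IsIndep G A) : diffSet G A ≤ critDiff G := by
  apply le_csSup
  · refine ⟨Nat.card V, ?_⟩
    rintro d ⟨I, -, rfl⟩
    have h1 : (I.ncard : ℤ) ≤ Nat.card V := by exact_mod_cast ncard_le_natCard I
    have h2 : (0 : ℤ) ≤ ((nbhd G I).ncard : ℤ) := by positivity
    simp only [diffSet]; omega
  · exact ⟨A, hA, rfl⟩

lemma sym2_mem_nonempty (e : Sym2 V) : ∃ x, x ∈ e := by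
  induction e with
  | h a b => exact ⟨a, by simp⟩

/-- Key counting: α + μ ≤ n, in the concrete form. -/
lemma indep_add_matching_le {s : Set V} (hs : IsIndep G s) {M : G.Subgraph}
    (hM : M.IsMatching) : s.ncard + M.edgeSet.ncard ≤ Nat.card V := by
  classical
  have hchoice : ∀ e ∈ M.edgeSet, ∃ x, x ∈ e ∧ x ∉ s := by
    intro e he
    induction e with
    | h a b =>
      have hadj : G.Adj a b := M.adj_sub (SimpleGraph.Subgraph.mem_edgeSet.mp he)
      by_cases ha : a ∈ s
      · refine ⟨b, by simp, fun hb => ?_⟩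
        exact hs ha hb (G.ne_of_adj hadj) hadj
      · exact ⟨a, by simp, ha⟩
  set g : Sym2 V → V := fun e => if h : ∃ x, x ∈ e ∧ x ∉ s then h.choose
    else (sym2_mem_nonempty e).choose with hg
  have hmem : ∀ e ∈ M.edgeSet, g e ∈ e ∧ g e ∉ s := by
    intro e he
    rw [hg]
    simp only
    rw [dif_pos (hchoice e he)]
    exact (hchoice e he).choose_spec
  have hinj : Set.InjOn g M.edgeSet := by
    intro e he f hf hef
    exact edge_eq_of_mem hM he hf (hmem e he).1 (hef ▸ (hmem f hf).1)
  have hle : M.edgeSet.ncard ≤ (sᶜ : Set V).ncard :=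
    Set.ncard_le_ncard_of_injOn g (fun e he => (hmem e he).2) hinj (Set.toFinite _)
  have := Set.ncard_add_ncard_compl s (Set.toFinite _) (Set.toFinite _)
  omega

lemma alpha_add_mu_le (G : SimpleGraph V) : alphaNum G + muNum G ≤ Nat.card V := by
  obtain ⟨S, hS, hScard⟩ := exists_maxIndep G
  obtain ⟨M, hM, hMcard⟩ := exists_maxMatching G
  calc alphaNum G + muNum G = S.ncard + M.edgeSet.ncard := by rw [hScard, hMcard]
    _ ≤ Nat.card V := indep_add_matching_le hS hM

end Nums
section KE
variable [Finite V] {G : SimpleGraph V}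

lemma indep_nbhd_subset_compl {S : Set V} (hS : IsIndep G S) : nbhd G S ⊆ Sᶜ := by
  rintro x ⟨a, ha, hadj⟩ hx
  exact hS ha hx (G.ne_of_adj hadj) hadj

lemma inter_verts_le_nbhd {A : Set V} {M : G.Subgraph} (hM : M.IsMatching) :
    (A ∩ M.verts).ncard ≤ (nbhd G A).ncard := by
  apply Set.ncard_le_ncard_of_injOn (mpartner M)
  · rintro a ⟨haA, haV⟩
    exact ⟨a, haA, M.adj_sub (mpartner_adj hM haV)⟩
  · exact (mpartner_injOn hM).mono Set.inter_subset_right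

lemma diff_le_of_matching {I : Set V} {M : G.Subgraph} (hM : M.IsMatching) :
    diffSet G I ≤ (Nat.card V : ℤ) - 2 * M.edgeSet.ncard := by
  have h1 : (I ∩ M.verts).ncard ≤ (nbhd G I).ncard := inter_verts_le_nbhd hM
  have h2 : (I \ M.verts).ncard ≤ (M.vertsᶜ : Set V).ncard :=
    Set.ncard_le_ncard (Set.diff_subset_compl _ _) (Set.toFinite _)
  have h3 : M.verts.ncard + (M.vertsᶜ : Set V).ncard = Nat.card V :=
    Set.ncard_add_ncard_compl _ (Set.toFinite _) (Set.toFinite _)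
  have h4 : M.verts.ncard = 2 * M.edgeSet.ncard := matching_verts_ncard hM
  have h5 : (I ∩ M.verts).ncard + (I \ M.verts).ncard = I.ncard :=
    Set.ncard_inter_add_ncard_diff_eq_ncard I M.verts (Set.toFinite _)
  simp only [diffSet]
  omega

lemma compl_ncard_of_maxIndep (hKE : KonigEgervary G) {S : Set V} (hS : IsMaxIndep G S) :
    (Sᶜ : Set V).ncard = muNum G := by
  have h1 : S.ncard + (Sᶜ : Set V).ncard = Nat.card V :=
    Set.ncard_add_ncard_compl _ (Set.toFinite _) (Set.toFinite _)
  have h2 := hS.2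
  have h3 := hKE
  rw [KonigEgervary] at h3
  omega

lemma critDiff_eq (hKE : KonigEgervary G) :
    critDiff G = (alphaNum G : ℤ) - muNum G := by
  have hKE' : alphaNum G + muNum G = Nat.card V := hKE
  apply le_antisymm
  · apply csSup_le
    · exact ⟨diffSet G ∅, ∅, fun a ha => absurd ha (Set.notMem_empty a), rfl⟩
    · rintro d ⟨I, hI, rfl⟩
      obtain ⟨M, hM, hMcard⟩ := exists_maxMatching G
      have := diff_le_of_matching (I := I) hM
      rw [hMcard] at this
      have hcast : (Nat.card V : ℤ) = (alphaNum G : ℤ) + muNum G := by exact_mod_cast hKE'.symm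
      omega
  · obtain ⟨S, hS⟩ := exists_maxIndep G
    have h1 : diffSet G S ≤ critDiff G := diff_le_critDiff hS.1
    have h2 : (nbhd G S).ncard ≤ (Sᶜ : Set V).ncard :=
      Set.ncard_le_ncard (indep_nbhd_subset_compl hS.1) (Set.toFinite _)
    have h3 : (Sᶜ : Set V).ncard = muNum G := compl_ncard_of_maxIndep hKE hS
    have h4 : S.ncard = alphaNum G := hS.2
    have : ((alphaNum G : ℤ) - muNum G) ≤ diffSet G S := by
      simp only [diffSet, h4]
      omega
    omega

lemma maxIndep_critical (hKE : KonigEgervary G) {S : Set V} (hS : IsMaxIndep G S) :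
    IsCriticalIndep G S := by
  refine ⟨hS.1, le_antisymm (diff_le_critDiff hS.1) ?_⟩
  rw [critDiff_eq hKE]
  have h2 : (nbhd G S).ncard ≤ (Sᶜ : Set V).ncard :=
    Set.ncard_le_ncard (indep_nbhd_subset_compl hS.1) (Set.toFinite _)
  have h3 : (Sᶜ : Set V).ncard = muNum G := compl_ncard_of_maxIndep hKE hS
  have h4 : S.ncard = alphaNum G := hS.2
  simp only [diffSet, h4]
  omega

lemma ker_subset_core (hKE : KonigEgervary G) : kerSet G ⊆ coreSet G := by
  intro x hx
  intro S hS
  exact hx S (maxIndep_critical hKE hS)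

end KE
set_option linter.unusedSectionVars false

section Induce
variable [Finite V] {G : SimpleGraph V} {W : Set V}

lemma indep_image {s' : Set ↥W} (h : IsIndep (G.induce W) s') :
    IsIndep G (Subtype.val '' s') := by
  rintro _ ⟨x, hx, rfl⟩ _ ⟨y, hy, rfl⟩ hne hadj
  have hxy : x ≠ y := fun he => hne (by rw [he])
  exact h hx hy hxy (by simpa using hadj)

lemma indep_preimage {s : Set V} (h : IsIndep G s) :
    IsIndep (G.induce W) {x : ↥W | ↑x ∈ s} := by
  intro x hx y hy hne hadj
  exact h hx hy (fun he => hne (Subtype.ext he)) (by simpa using hadj)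

lemma image_preimage_of_subset {s : Set V} (hsub : s ⊆ W) :
    Subtype.val '' {x : ↥W | ↑x ∈ s} = s := by
  ext a
  simp only [Set.mem_image, Set.mem_setOf_eq, Subtype.exists, exists_and_left]
  constructor
  · rintro ⟨b, hb, hbW, rfl⟩; exact hb
  · intro ha; exact ⟨a, ha, hsub ha, rfl⟩

lemma ncard_image_val (s' : Set ↥W) : (Subtype.val '' s').ncard = s'.ncard :=
  Set.ncard_image_of_injective _ Subtype.val_injective

/-- transfer a matching of `G` whose vertices lie in `W` to `G.induce W`. -/
lemma matching_toInduce {M : G.Subgraph} (hM : M.IsMatching) (hsub : M.verts ⊆ W) :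
    ∃ M' : (G.induce W).Subgraph, M'.IsMatching ∧ M'.edgeSet.ncard = M.edgeSet.ncard := by
  let N : (G.induce W).Subgraph :=
    { verts := Subtype.val ⁻¹' M.verts
      Adj := fun a b => M.Adj ↑a ↑b
      adj_sub := fun h => by simpa using M.adj_sub h
      edge_vert := fun h => M.edge_vert h
      symm := ⟨fun a b h => h.symm⟩ }
  have hNM : N.IsMatching := by
    intro a ha
    obtain ⟨w, hw, hu⟩ := hM ha
    have hwv : w ∈ M.verts := M.edge_vert hw.symm
    exact ⟨⟨w, hsub hwv⟩, hw, fun y hy => Subtype.ext (hu _ hy)⟩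
  refine ⟨N, hNM, ?_⟩
  have h1 : N.verts.ncard = M.verts.ncard := by
    have himg : Subtype.val '' N.verts = M.verts := by
      ext a
      simp only [Set.mem_image, Set.mem_preimage, Subtype.exists, exists_and_left]
      constructor
      · intro hb; aesop
      · intro ha; exact ⟨a, hsub ha, ha, rfl⟩
    rw [← himg, ncard_image_val]
  have h2 := matching_verts_ncard hNM
  have h3 := matching_verts_ncard hM
  omega

/-- transfer a matching of `G.induce W` to `G`. -/
lemma matching_ofInduce {M' : (G.induce W).Subgraph} (hM' : M'.IsMatching) :
    ∃ M : G.Subgraph, M.IsMatching ∧ M.edgeSet.ncard = M'.edgeSet.ncard ∧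
      M.verts = Subtype.val '' M'.verts := by
  let M : G.Subgraph :=
    { verts := Subtype.val '' M'.verts
      Adj := fun a b => ∃ (ha : a ∈ W) (hb : b ∈ W), M'.Adj ⟨a, ha⟩ ⟨b, hb⟩
      adj_sub := by rintro a b ⟨ha, hb, h⟩; simpa using M'.adj_sub h
      edge_vert := by rintro a b ⟨ha, hb, h⟩; exact ⟨⟨a, ha⟩, M'.edge_vert h, rfl⟩
      symm := ⟨by rintro a b ⟨ha, hb, h⟩; exact ⟨hb, ha, h.symm⟩⟩ }
  have hMm : M.IsMatching := by
    rintro _ ⟨x, hx, rfl⟩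
    obtain ⟨w, hw, hu⟩ := hM' hx
    refine ⟨↑w, ⟨x.2, w.2, by simpa using hw⟩, ?_⟩
    rintro y ⟨hy1, hy2, hadj⟩
    have hxx : (⟨↑x, hy1⟩ : ↥W) = x := Subtype.ext rfl
    rw [hxx] at hadj
    rw [← hu _ hadj]
  refine ⟨M, hMm, ?_, rfl⟩
  have h1 : M.verts.ncard = M'.verts.ncard := ncard_image_val _
  have h2 := matching_verts_ncard hMm
  have h3 := matching_verts_ncard hM'
  omega

lemma mu_induce_le (G : SimpleGraph V) (W : Set V) : muNum (G.induce W) ≤ muNum G := by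
  obtain ⟨M', hM', hcard⟩ := exists_maxMatching (G.induce W)
  obtain ⟨M, hMm, hMe, -⟩ := matching_ofInduce hM'
  rw [← hcard, ← hMe]
  exact matching_ncard_le_mu hMm

/-- from a matching, get one avoiding a given vertex with at most one edge fewer. -/
lemma matching_avoid {M : G.Subgraph} (hM : M.IsMatching) (x : V) :
    ∃ M₂ : G.Subgraph, M₂.IsMatching ∧ x ∉ M₂.verts ∧
      M.edgeSet.ncard ≤ M₂.edgeSet.ncard + 1 := by
  have huniq : ∀ {c z z' : V}, M.Adj c z → M.Adj c z' → z = z' := by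
    intro c z z' h1 h2
    obtain ⟨u, -, hu⟩ := hM (M.edge_vert h1)
    exact (hu _ h1).trans (hu _ h2).symm
  by_cases hx : x ∈ M.verts
  · set y := mpartner M x with hy
    have hxy : M.Adj x y := mpartner_adj hM hx
    have hkey : ∀ {a w : V}, M.Adj a w → a ∉ ({x, y} : Set V) → w ∉ ({x, y} : Set V) := by
      intro a w haw ha hw
      simp only [Set.mem_insert_iff, Set.mem_singleton_iff] at ha hw
      rcases hw with rfl | rfl
      · exact ha (Or.inr (huniq haw.symm hxy))
      · exact ha (Or.inl (huniq haw.symm hxy.symm))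
    have hmm : (M.deleteVerts {x, y}).IsMatching := by
      rintro a ha
      rw [SimpleGraph.Subgraph.deleteVerts_verts] at ha
      obtain ⟨haM, hans⟩ := ha
      obtain ⟨w, hw, hu⟩ := hM haM
      have hwns : w ∉ ({x, y} : Set V) := hkey hw hans
      refine ⟨w, ?_, ?_⟩
      · show (M.deleteVerts {x, y}).Adj a w
        rw [SimpleGraph.Subgraph.deleteVerts_adj]
        exact ⟨haM, hans, M.edge_vert hw.symm, hwns, hw⟩
      · intro z hz
        have hz' : M.Adj a z := ((SimpleGraph.Subgraph.deleteVerts_adj).mp hz).2.2.2.2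
        exact hu _ hz'
    refine ⟨M.deleteVerts {x, y}, hmm, ?_, ?_⟩
    · rw [SimpleGraph.Subgraph.deleteVerts_verts]
      rintro ⟨-, hc⟩
      exact hc (Or.inl rfl)
    · have hEq : (M.deleteVerts {x, y}).edgeSet = M.edgeSet \ {s(x, y)} := by
        ext e
        induction e with
        | h a b =>
          simp only [SimpleGraph.Subgraph.mem_edgeSet, Set.mem_diff, Set.mem_singleton_iff]
          constructor
          · intro h
            rw [SimpleGraph.Subgraph.deleteVerts_adj] at h
            obtain ⟨haM, hans, hbM, hbns, hab⟩ := h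
            refine ⟨hab, fun hcontra => ?_⟩
            rw [Sym2.eq_iff] at hcontra
            rcases hcontra with ⟨rfl, rfl⟩ | ⟨rfl, rfl⟩
            · exact hans (Or.inl rfl)
            · exact hans (Or.inr rfl)
          · rintro ⟨hab, hne⟩
            rw [SimpleGraph.Subgraph.deleteVerts_adj]
            have hans : a ∉ ({x, y} : Set V) := by
              intro hmem
              simp only [Set.mem_insert_iff, Set.mem_singleton_iff] at hmem
              rcases hmem with rfl | rfl
              · exact hne (by rw [Sym2.eq_iff]; exact Or.inl ⟨rfl, huniq hab hxy⟩)
              · exact hne (by rw [Sym2.eq_iff]; exact Or.inr ⟨rfl, huniq hab hxy.symm⟩)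
            exact ⟨M.edge_vert hab, hans, M.edge_vert hab.symm, hkey hab hans, hab⟩
      rw [hEq]
      have hmem : s(x, y) ∈ M.edgeSet := SimpleGraph.Subgraph.mem_edgeSet.mpr hxy
      rw [Set.ncard_diff_singleton_of_mem hmem]
      have hpos : 0 < M.edgeSet.ncard := by
        rw [Set.ncard_pos (Set.toFinite _)]
        exact ⟨_, hmem⟩
      omega
  · exact ⟨M, hM, hx, by omega⟩

lemma card_compl_singleton (v : V) : Nat.card ↥({v}ᶜ : Set V) + 1 = Nat.card V := by
  rw [Nat.card_coe_set_eq]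
  have := Set.ncard_add_ncard_compl ({v} : Set V) (Set.toFinite _) (Set.toFinite _)
  rw [Set.ncard_singleton] at this
  omega

end Induce
section CoreKer
variable [Finite V] {G : SimpleGraph V} {v : V}

lemma mem_core_iff : v ∈ coreSet G ↔ ∀ S : Set V, IsMaxIndep G S → v ∈ S := by
  constructor
  · intro h S hS; exact h S hS
  · intro h S hS; exact h S hS

lemma not_mem_ker_iff : v ∉ kerSet G ↔ ∃ A, IsCriticalIndep G A ∧ v ∉ A := by
  constructor
  · intro h
    by_contra hc
    push_neg at hc
    exact h (fun A hA => hc A hA)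
  · rintro ⟨A, hA, hvA⟩ h
    exact hvA (h A hA)

lemma mem_ker_mem {A : Set V} (h : v ∈ kerSet G) (hA : IsCriticalIndep G A) : v ∈ A :=
  h A hA

lemma image_notmem (s' : Set ↥({v}ᶜ : Set V)) : v ∉ Subtype.val '' s' := by
  rintro ⟨x, -, hx⟩
  exact x.2 (Set.mem_singleton_iff.mpr hx)

lemma alpha_del_le : alphaNum (G.induce ({v}ᶜ : Set V)) ≤ alphaNum G := by
  obtain ⟨S', hS'⟩ := exists_maxIndep (G.induce ({v}ᶜ : Set V))
  rw [← hS'.2, ← ncard_image_val S']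
  exact indep_ncard_le_alpha (indep_image hS'.1)

lemma alpha_le_del_add_one : alphaNum G ≤ alphaNum (G.induce ({v}ᶜ : Set V)) + 1 := by
  obtain ⟨S, hS⟩ := exists_maxIndep G
  have hsub : S \ {v} ⊆ ({v}ᶜ : Set V) := fun x hx => hx.2
  have hind : IsIndep (G.induce ({v}ᶜ : Set V)) {x : ↥({v}ᶜ : Set V) | ↑x ∈ S \ {v}} :=
    indep_preimage (hS.1.mono Set.diff_subset)
  have hcard : ({x : ↥({v}ᶜ : Set V) | ↑x ∈ S \ {v}}).ncard = (S \ {v}).ncard := by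
    rw [← ncard_image_val {x : ↥({v}ᶜ : Set V) | ↑x ∈ S \ {v}}, image_preimage_of_subset hsub]
  have hge : S.ncard ≤ (S \ {v}).ncard + 1 := by
    have h1 : (S \ {v}).ncard + (S ∩ {v}).ncard = S.ncard := by
      rw [add_comm]
      exact Set.ncard_inter_add_ncard_diff_eq_ncard S {v} (Set.toFinite _)
    have h2 : (S ∩ {v}).ncard ≤ ({v} : Set V).ncard :=
      Set.ncard_le_ncard Set.inter_subset_right (Set.toFinite _)
    rw [Set.ncard_singleton] at h2
    omega
  calc alphaNum G = S.ncard := hS.2.symm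
    _ ≤ (S \ {v}).ncard + 1 := hge
    _ = ({x : ↥({v}ᶜ : Set V) | ↑x ∈ S \ {v}}).ncard + 1 := by rw [hcard]
    _ ≤ alphaNum (G.induce ({v}ᶜ : Set V)) + 1 := by
        exact Nat.add_le_add_right (indep_ncard_le_alpha hind) 1

lemma alpha_del_of_not_core (h : v ∉ coreSet G) :
    alphaNum (G.induce ({v}ᶜ : Set V)) = alphaNum G := by
  refine le_antisymm alpha_del_le ?_
  rw [mem_core_iff] at h
  push_neg at h
  obtain ⟨S, hS, hvS⟩ := h
  have hsub : S ⊆ ({v}ᶜ : Set V) := fun x hx => fun hc => hvS (hc ▸ hx)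
  have hind := indep_preimage (W := ({v}ᶜ : Set V)) hS.1
  have hcard : ({x : ↥({v}ᶜ : Set V) | ↑x ∈ S}).ncard = S.ncard := by
    rw [← ncard_image_val {x : ↥({v}ᶜ : Set V) | ↑x ∈ S}, image_preimage_of_subset hsub]
  rw [← hS.2, ← hcard]
  exact indep_ncard_le_alpha hind

lemma alpha_del_of_core (h : v ∈ coreSet G) :
    alphaNum (G.induce ({v}ᶜ : Set V)) + 1 = alphaNum G := by
  have h1 := alpha_le_del_add_one (G := G) (v := v)
  have h2 : alphaNum (G.induce ({v}ᶜ : Set V)) < alphaNum G := by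
    obtain ⟨S', hS'⟩ := exists_maxIndep (G.induce ({v}ᶜ : Set V))
    have himg : IsIndep G (Subtype.val '' S') := indep_image hS'.1
    have hle : (Subtype.val '' S').ncard ≤ alphaNum G := indep_ncard_le_alpha himg
    rcases lt_or_eq_of_le hle with hlt | heq
    · rw [← hS'.2, ← ncard_image_val S']; exact hlt
    · exfalso
      exact image_notmem S' ((mem_core_iff.mp h) _ ⟨himg, heq⟩)
  omega

lemma mu_del_ge_of_avoid {M : G.Subgraph} (hM : M.IsMatching) (hv : v ∉ M.verts) :
    M.edgeSet.ncard ≤ muNum (G.induce ({v}ᶜ : Set V)) := by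
  have hsub : M.verts ⊆ ({v}ᶜ : Set V) := fun x hx hc => hv (hc ▸ hx)
  obtain ⟨M', hM', hcard⟩ := matching_toInduce hM hsub
  rw [← hcard]
  exact matching_ncard_le_mu hM'

lemma mu_le_del_add_one : muNum G ≤ muNum (G.induce ({v}ᶜ : Set V)) + 1 := by
  obtain ⟨M, hM, hMcard⟩ := exists_maxMatching G
  obtain ⟨M₂, hM₂, hv₂, hle⟩ := matching_avoid hM v
  have := mu_del_ge_of_avoid hM₂ hv₂
  omega

lemma mu_del_exists :
    ∃ M : G.Subgraph, M.IsMatching ∧ M.edgeSet.ncard = muNum (G.induce ({v}ᶜ : Set V)) ∧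
      v ∉ M.verts := by
  obtain ⟨M', hM', hcard⟩ := exists_maxMatching (G.induce ({v}ᶜ : Set V))
  obtain ⟨M, hMm, hMe, hMv⟩ := matching_ofInduce hM'
  refine ⟨M, hMm, by omega, ?_⟩
  rw [hMv]
  exact image_notmem _

end CoreKer
section Hall
variable [Finite V] {G : SimpleGraph V}

lemma exists_maxMatching_avoiding (hKE : KonigEgervary G) {v : V} (hv : v ∈ kerSet G) :
    ∃ M : G.Subgraph, M.IsMatching ∧ M.edgeSet.ncard = muNum G ∧ v ∉ M.verts := by
  classical
  haveI := Fintype.ofFinite V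
  obtain ⟨S, hS⟩ := exists_maxIndep G
  have hvS : v ∈ S := hv S (maxIndep_critical hKE hS)
  haveI : Fintype ↥(Sᶜ : Set V) := Fintype.ofFinite _
  set t : ↥(Sᶜ : Set V) → Finset V :=
    fun w => Finset.univ.filter (fun u => G.Adj ↑w u ∧ u ∈ S ∧ u ≠ v) with ht
  have hmem_t : ∀ (w : ↥(Sᶜ : Set V)) (u : V), u ∈ t w ↔ (G.Adj ↑w u ∧ u ∈ S ∧ u ≠ v) := by
    intro w u
    rw [ht]
    simp
  have hHall : ∀ T : Finset ↥(Sᶜ : Set V), T.card ≤ (T.biUnion t).card := by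
    by_contra hc
    push_neg at hc
    obtain ⟨T, hT⟩ := hc
    set NT : Set V := ↑(T.biUnion t) with hNT
    set A : Set V := S \ (NT ∪ {v}) with hA
    have hAind : IsIndep G A := hS.1.mono Set.diff_subset
    have hvA : v ∉ A := fun h => h.2 (Or.inr rfl)
    have hNTcard : NT.ncard < T.card := by
      rw [hNT, Set.ncard_coe_finset]
      exact hT
    have hA1 : alphaNum G ≤ A.ncard + T.card := by
      have h1 : S.ncard ≤ A.ncard + (NT ∪ {v}).ncard := by
        rw [hA]
        exact Set.ncard_le_ncard_diff_add_ncard S (NT ∪ {v}) (Set.toFinite _)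
      have h2 : (NT ∪ {v}).ncard ≤ NT.ncard + 1 := by
        have := Set.ncard_union_le NT ({v} : Set V)
        rw [Set.ncard_singleton] at this
        exact this
      have h3 := hS.2
      omega
    have hA2 : nbhd G A ⊆ (Sᶜ : Set V) \ (Subtype.val '' (↑T : Set ↥(Sᶜ : Set V))) := by
      rintro u ⟨a, haA, hadj⟩
      constructor
      · intro huS
        exact hS.1 haA.1 huS (G.ne_of_adj hadj) hadj
      · rintro ⟨w, hwT, rfl⟩
        apply haA.2
        refine Or.inl ?_
        rw [hNT]
        rw [Finset.coe_biUnion]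
        refine Set.mem_iUnion₂.mpr ⟨w, hwT, ?_⟩
        rw [Finset.mem_coe, hmem_t]
        exact ⟨hadj.symm, haA.1, fun h => hvA (h ▸ haA)⟩
    have himgT : (Subtype.val '' (↑T : Set ↥(Sᶜ : Set V))) ⊆ (Sᶜ : Set V) := by
      rintro _ ⟨w, -, rfl⟩
      exact w.2
    have himgTcard : (Subtype.val '' (↑T : Set ↥(Sᶜ : Set V))).ncard = T.card := by
      rw [Set.ncard_image_of_injective _ Subtype.val_injective, Set.ncard_coe_finset]
    have hA3 : (nbhd G A).ncard + T.card ≤ (Sᶜ : Set V).ncard := by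
      have h1 : (nbhd G A).ncard ≤ ((Sᶜ : Set V) \ (Subtype.val '' (↑T : Set ↥(Sᶜ : Set V)))).ncard :=
        Set.ncard_le_ncard hA2 (Set.toFinite _)
      have h2 := Set.ncard_diff himgT (Set.toFinite _)
      have h3 : (Subtype.val '' (↑T : Set ↥(Sᶜ : Set V))).ncard ≤ (Sᶜ : Set V).ncard :=
        Set.ncard_le_ncard himgT (Set.toFinite _)
      omega
    have hSc : (Sᶜ : Set V).ncard = muNum G := compl_ncard_of_maxIndep hKE hS
    have hcrit : IsCriticalIndep G A := by
      refine ⟨hAind, le_antisymm (diff_le_critDiff hAind) ?_⟩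
      rw [critDiff_eq hKE]
      simp only [diffSet]
      have c1 : (alphaNum G : ℤ) ≤ (A.ncard : ℤ) + T.card := by exact_mod_cast hA1
      have c2 : ((nbhd G A).ncard : ℤ) + T.card ≤ muNum G := by
        rw [← hSc]; exact_mod_cast hA3
      omega
    exact hvA (hv A hcrit)
  obtain ⟨f, hfinj, hft⟩ := (Finset.all_card_le_biUnion_card_iff_exists_injective t).mp hHall
  have hfS : ∀ w, f w ∈ S ∧ f w ≠ v ∧ G.Adj ↑w (f w) := by
    intro w
    have := (hmem_t w (f w)).mp (hft w)
    exact ⟨this.2.1, this.2.2, this.1⟩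
  have hdisj : Disjoint (Sᶜ : Set V) (Set.range f) := by
    rw [Set.disjoint_right]
    rintro x ⟨w, rfl⟩
    intro hx
    exact hx (hfS w).1
  obtain ⟨M, hMverts, hMmatch⟩ :=
    SimpleGraph.Subgraph.IsMatching.exists_of_disjoint_sets_of_equiv hdisj
      (Equiv.ofInjective f hfinj)
      (fun w => by simpa using (hfS w).2.2)
  have hvM : v ∉ M.verts := by
    rw [hMverts]
    rintro (h | ⟨w, rfl⟩)
    · exact h hvS
    · exact (hfS w).2.1 rfl
  refine ⟨M, hMmatch, ?_, hvM⟩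
  have hvertscard : M.verts.ncard = 2 * muNum G := by
    rw [hMverts, Set.ncard_union_eq hdisj (Set.toFinite _) (Set.toFinite _)]
    have h1 : (Sᶜ : Set V).ncard = muNum G := compl_ncard_of_maxIndep hKE hS
    have h2 : (Set.range f).ncard = (Sᶜ : Set V).ncard := by
      rw [← Nat.card_coe_set_eq, ← Nat.card_coe_set_eq]
      exact Nat.card_congr (Equiv.ofInjective f hfinj).symm
    omega
  have := matching_verts_ncard hMmatch
  omega

end Hall
section Main
variable [Finite V] {G : SimpleGraph V} {v : V}

lemma KE_del_of_not_core (hKE : KonigEgervary G) (h : v ∉ coreSet G) :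
    KonigEgervary (G.induce ({v}ᶜ : Set V)) := by
  have hKEnat : alphaNum G + muNum G = Nat.card V := hKE
  have hcardW := card_compl_singleton (V := V) v
  have hle := alpha_add_mu_le (G.induce ({v}ᶜ : Set V))
  have halpha := alpha_del_of_not_core h
  have hmu := mu_le_del_add_one (G := G) (v := v)
  have hmupos : 1 ≤ muNum G := by
    rw [mem_core_iff] at h
    push_neg at h
    obtain ⟨S, hS, hvS⟩ := h
    have h1 : v ∈ (Sᶜ : Set V) := hvS
    have h2 : 1 ≤ (Sᶜ : Set V).ncard := by
      rw [Nat.one_le_iff_ne_zero, ← Nat.pos_iff_ne_zero, Set.ncard_pos (Set.toFinite _)]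
      exact ⟨v, h1⟩
    rw [compl_ncard_of_maxIndep hKE hS] at h2
    exact h2
  show alphaNum (G.induce ({v}ᶜ : Set V)) + muNum (G.induce ({v}ᶜ : Set V)) =
    Nat.card ↥({v}ᶜ : Set V)
  omega

lemma KE_del_of_ker (hKE : KonigEgervary G) (h : v ∈ kerSet G) :
    KonigEgervary (G.induce ({v}ᶜ : Set V)) := by
  have hKEnat : alphaNum G + muNum G = Nat.card V := hKE
  have hcardW := card_compl_singleton (V := V) v
  have hle := alpha_add_mu_le (G.induce ({v}ᶜ : Set V))
  have hcore : v ∈ coreSet G := ker_subset_core hKE h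
  have halpha := alpha_del_of_core hcore
  obtain ⟨M, hMm, hMcard, hMv⟩ := exists_maxMatching_avoiding hKE h
  have hmu1 : muNum G ≤ muNum (G.induce ({v}ᶜ : Set V)) := by
    rw [← hMcard]
    exact mu_del_ge_of_avoid hMm hMv
  show alphaNum (G.induce ({v}ᶜ : Set V)) + muNum (G.induce ({v}ᶜ : Set V)) =
    Nat.card ↥({v}ᶜ : Set V)
  omega

lemma not_KE_del (hKE : KonigEgervary G) (hc : v ∈ coreSet G) (hk : v ∉ kerSet G) :
    ¬ KonigEgervary (G.induce ({v}ᶜ : Set V)) := by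
  intro hH
  have hKEnat : alphaNum G + muNum G = Nat.card V := hKE
  have hHnat : alphaNum (G.induce ({v}ᶜ : Set V)) + muNum (G.induce ({v}ᶜ : Set V)) =
    Nat.card ↥({v}ᶜ : Set V) := hH
  have hcardW := card_compl_singleton (V := V) v
  have halpha := alpha_del_of_core hc
  have hmuH : muNum (G.induce ({v}ᶜ : Set V)) = muNum G := by omega
  obtain ⟨M, hMm, hMcard, hMv⟩ := mu_del_exists (G := G) (v := v)
  rw [hmuH] at hMcard
  obtain ⟨A, hA, hvA⟩ := not_mem_ker_iff.mp hk
  -- counting contradiction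
  have hdA : diffSet G A = (alphaNum G : ℤ) - muNum G := by
    rw [hA.2, critDiff_eq hKE]
  have h1 : (A ∩ M.verts).ncard ≤ (nbhd G A).ncard := inter_verts_le_nbhd hMm
  have h2 : (A \ M.verts).ncard + 1 ≤ (M.vertsᶜ : Set V).ncard := by
    have hins : insert v (A \ M.verts) ⊆ (M.vertsᶜ : Set V) := by
      rintro x (rfl | hx)
      · exact hMv
      · exact fun hc' => hx.2 hc'
    have hcard : (insert v (A \ M.verts)).ncard = (A \ M.verts).ncard + 1 :=
      Set.ncard_insert_of_notMem (fun hmem => hvA hmem.1) (Set.toFinite _)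
    have := Set.ncard_le_ncard hins (Set.toFinite _)
    omega
  have h3 : M.verts.ncard + (M.vertsᶜ : Set V).ncard = Nat.card V :=
    Set.ncard_add_ncard_compl _ (Set.toFinite _) (Set.toFinite _)
  have h4 : M.verts.ncard = 2 * M.edgeSet.ncard := matching_verts_ncard hMm
  have h5 : (A ∩ M.verts).ncard + (A \ M.verts).ncard = A.ncard :=
    Set.ncard_inter_add_ncard_diff_eq_ncard A M.verts (Set.toFinite _)
  rw [diffSet] at hdA
  have hcast : (alphaNum G : ℤ) + muNum G = Nat.card V := by exact_mod_cast hKEnat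
  have hMce : (M.edgeSet.ncard : ℤ) = muNum G := by exact_mod_cast hMcard
  push_cast at hdA ⊢
  omega

end Main

theorem stmt_17 [Fintype V] (G : SimpleGraph V) (hKE : KonigEgervary G) :
    ({v : V | KonigEgervary (G.induce ({v}ᶜ : Set V))}.ncard : ℤ) =
      (Nat.card V : ℤ) - (coreSet G).ncard + (kerSet G).ncard := by
  have hEq : {v : V | KonigEgervary (G.induce ({v}ᶜ : Set V))} =
      ((coreSet G \ kerSet G)ᶜ : Set V) := by
    ext v
    simp only [Set.mem_setOf_eq, Set.mem_compl_iff, Set.mem_diff]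
    constructor
    · intro hgood hbad
      exact not_KE_del hKE hbad.1 hbad.2 hgood
    · intro h
      by_cases hc : v ∈ coreSet G
      · have hk : v ∈ kerSet G := by
          by_contra hk
          exact h ⟨hc, hk⟩
        exact KE_del_of_ker hKE hk
      · exact KE_del_of_not_core hKE hc
  rw [hEq]
  have hks : kerSet G ⊆ coreSet G := ker_subset_core hKE
  have h1 : (coreSet G \ kerSet G).ncard = (coreSet G).ncard - (kerSet G).ncard :=
    Set.ncard_diff hks (Set.toFinite _)
  have h2 : (coreSet G \ kerSet G).ncard + ((coreSet G \ kerSet G)ᶜ : Set V).ncard =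
      Nat.card V :=
    Set.ncard_add_ncard_compl _ (Set.toFinite _) (Set.toFinite _)
  have h3 : (kerSet G).ncard ≤ (coreSet G).ncard :=
    Set.ncard_le_ncard hks (Set.toFinite _)
  have h4 : (coreSet G).ncard ≤ Nat.card V := ncard_le_natCard _
  push_cast
  omega
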